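/- Let F be an algebraically closed field of characteristic p > 2 and let M be a function field over F. Let t ∈ M be transcendental over F and not a p-th power in M (so M/F(t) is separable). Let x ∈ M, set u = (x^p + t)/(x^p − t), and let b ∈ F with b ≠ 1 and b ≠ −1. Then for every prime v of M that is unramified over F(t) and satisfies v(t) = 0, one has v(u + b) ∈ {−1, 0, 1} and v(u^{−1} + b) ∈ {−1, 0, 1}. (Here x^p − t ≠ 0, x^p + t ≠ 0, u + b ≠ 0 and u^{−1} + b ≠ 0 automatically, since t is not a p-th power in M and F is algebraically closed.) -/

import Mathlib

/-- A prime of a function field `M` over a constant field `F`: a surjective additive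
valuation `M → ℤ` that is trivial on `F`. -/
structure FFPrime (F M : Type*) [Field F] [Field M] [Algebra F M] where
  v : M → ℤ
  map_mul : ∀ x y : M, x ≠ 0 → y ≠ 0 → v (x * y) = v x + v y
  add_min : ∀ x y : M, x ≠ 0 → y ≠ 0 → x + y ≠ 0 → min (v x) (v y) ≤ v (x + y)
  surj : ∀ n : ℤ, ∃ x : M, x ≠ 0 ∧ v x = n
  triv : ∀ c : F, c ≠ 0 → v (algebraMap F M c) = 0

/-- A prime of `M` is unramified over `F(t)` if some nonzero element of `F(t)` has
valuation `1`. -/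
def FFPrime.UnramifiedOver {F M : Type*} [Field F] [Field M] [Algebra F M]
    (P : FFPrime F M) (t : M) : Prop :=
  ∃ r : M, r ∈ IntermediateField.adjoin F {t} ∧ r ≠ 0 ∧ P.v r = 1

namespace FFPrime

variable {F M : Type*} [Field F] [Field M] [Algebra F M] (P : FFPrime F M)

lemma v_one' : P.v 1 = 0 := by
  have h := P.map_mul 1 1 one_ne_zero one_ne_zero
  rw [one_mul] at h; omega

lemma v_neg' (x : M) (hx : x ≠ 0) : P.v (-x) = P.v x := by
  have h1 : P.v (-1 : M) = 0 := by
    have h := P.map_mul (-1) (-1) (by simp) (by simp)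
    rw [neg_mul_neg, one_mul] at h
    have := P.v_one'
    omega
  have h := P.map_mul (-1) x (by simp) hx
  rw [neg_one_mul] at h
  omega

lemma v_inv' (x : M) (hx : x ≠ 0) : P.v x⁻¹ = -P.v x := by
  have h := P.map_mul x x⁻¹ hx (inv_ne_zero hx)
  rw [mul_inv_cancel₀ hx] at h
  have := P.v_one'
  omega

lemma v_div' (x y : M) (hx : x ≠ 0) (hy : y ≠ 0) : P.v (x / y) = P.v x - P.v y := by
  rw [div_eq_mul_inv, P.map_mul x y⁻¹ hx (inv_ne_zero hy), P.v_inv' y hy]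
  ring

lemma v_pow' (x : M) (hx : x ≠ 0) (n : ℕ) : P.v (x ^ n) = n * P.v x := by
  induction n with
  | zero => simpa using P.v_one'
  | succ n ih =>
    rw [pow_succ, P.map_mul _ x (pow_ne_zero n hx) hx, ih]
    push_cast; ring

lemma v_add_left' (x y : M) (hx : x ≠ 0) (hy : y ≠ 0) (h : P.v x < P.v y) :
    P.v (x + y) = P.v x := by
  have hxy : x + y ≠ 0 := by
    intro h0
    have hy' : y = -x := eq_neg_of_add_eq_zero_right h0
    rw [hy', P.v_neg' x hx] at h
    exact lt_irrefl _ h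
  have h1 := P.add_min x y hx hy hxy
  rw [min_eq_left h.le] at h1
  have h2 := P.add_min (x + y) (-y) hxy (neg_ne_zero.mpr hy) (by simpa using hx)
  rw [add_neg_cancel_right, P.v_neg' y hy] at h2
  rcases min_le_iff.mp h2 with h3 | h3 <;> omega

lemma v_add_ne' (x y : M) (hx : x ≠ 0) (hy : y ≠ 0) (h : P.v x ≠ P.v y) :
    P.v (x + y) = min (P.v x) (P.v y) := by
  rcases lt_or_gt_of_ne h with h' | h'
  · rw [P.v_add_left' x y hx hy h', min_eq_left h'.le]
  · rw [add_comm, P.v_add_left' y x hy hx h', min_eq_right h'.le]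

lemma v_multiset' (s : Multiset M) (h : ∀ x ∈ s, x ≠ 0) :
    s.prod ≠ 0 ∧ P.v s.prod = (s.map P.v).sum := by
  induction s using Multiset.induction with
  | empty => simpa using P.v_one'
  | cons a s ih =>
    have ha : a ≠ 0 := h a (Multiset.mem_cons_self a s)
    obtain ⟨h1, h2⟩ := ih (fun x hx => h x (Multiset.mem_cons_of_mem hx))
    constructor
    · rw [Multiset.prod_cons]; exact mul_ne_zero ha h1
    · rw [Multiset.prod_cons, P.map_mul a s.prod ha h1, h2, Multiset.map_cons,
        Multiset.sum_cons]

/-- There is a constant `a` such that `t - a` is a uniformizer. -/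
lemma exists_uniformizer' [IsAlgClosed F] {t : M} (htrans : Transcendental F t)
    (hPt : P.v t = 0) (hunr : P.UnramifiedOver t) :
    ∃ a : F, P.v (t - algebraMap F M a) = 1 := by
  have htne : ∀ c : F, t - algebraMap F M c ≠ 0 := by
    intro c h
    rw [sub_eq_zero] at h
    exact htrans (h ▸ isAlgebraic_algebraMap c)
  have ht0 : t ≠ 0 := by simpa using htne 0
  have hge : ∀ c : F, 0 ≤ P.v (t - algebraMap F M c) := by
    intro c
    by_cases hc : c = 0
    · simp [hc, hPt]
    · have h := P.add_min t (-(algebraMap F M c)) ht0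
        (neg_ne_zero.mpr ((map_ne_zero (algebraMap F M)).mpr hc))
        (by rw [← sub_eq_add_neg]; exact htne c)
      rw [← sub_eq_add_neg, P.v_neg' _ ((map_ne_zero (algebraMap F M)).mpr hc),
        P.triv c hc, hPt] at h
      simpa using h
  -- valuation of a polynomial in t
  have hpoly : ∀ f : Polynomial F, f ≠ 0 →
      P.v ((Polynomial.aeval t) f) =
        (f.roots.map (fun c => P.v (t - algebraMap F M c))).sum := by
    intro f hf
    have hsplit : f.Splits := IsAlgClosed.splits f
    conv_lhs => rw [hsplit.eq_prod_roots]
    rw [_root_.map_mul, Polynomial.aeval_C, map_multiset_prod, Multiset.map_map]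
    have heq : ∀ c : F, ((Polynomial.aeval t) ∘ fun a => Polynomial.X - Polynomial.C a) c
        = t - algebraMap F M c := by
      intro c; simp
    rw [Multiset.map_congr rfl (fun c _ => heq c)]
    obtain ⟨hne, hv⟩ := P.v_multiset' (f.roots.map (fun c => t - algebraMap F M c))
      (by
        intro y hy
        obtain ⟨c, _, rfl⟩ := Multiset.mem_map.1 hy
        exact htne c)
    rw [P.map_mul _ _ ((map_ne_zero (algebraMap F M)).mpr
      (Polynomial.leadingCoeff_ne_zero.mpr hf)) hne,
      P.triv _ (Polynomial.leadingCoeff_ne_zero.mpr hf), hv, Multiset.map_map]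
    simp
  obtain ⟨r, hrmem, hr0, hr1⟩ := hunr
  rw [IntermediateField.mem_adjoin_simple_iff] at hrmem
  obtain ⟨f, g, hr⟩ := hrmem
  have hgf : (Polynomial.aeval t) g ≠ 0 := by
    intro h; rw [h, div_zero] at hr; exact hr0 hr
  have hff : (Polynomial.aeval t) f ≠ 0 := by
    intro h; rw [h, zero_div] at hr; exact hr0 hr
  have hf : f ≠ 0 := fun h => hff (by simp [h])
  have hg : g ≠ 0 := fun h => hgf (by simp [h])
  have hdiff : (f.roots.map (fun c => P.v (t - algebraMap F M c))).sum -
      (g.roots.map (fun c => P.v (t - algebraMap F M c))).sum = 1 := by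
    rw [← hpoly f hf, ← hpoly g hg, ← P.v_div' _ _ hff hgf, ← hr, hr1]
  have hSg : 0 ≤ (g.roots.map (fun c => P.v (t - algebraMap F M c))).sum := by
    apply Multiset.sum_nonneg
    intro y hy
    obtain ⟨c, _, rfl⟩ := Multiset.mem_map.1 hy
    exact hge c
  -- existence of a root with positive valuation
  have hex : ∃ a : F, 0 < P.v (t - algebraMap F M a) := by
    by_contra hc
    push_neg at hc
    have : (f.roots.map (fun c => P.v (t - algebraMap F M c))).sum = 0 := by
      apply Multiset.sum_eq_zero
      intro y hy
      obtain ⟨c, _, rfl⟩ := Multiset.mem_map.1 hy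
      exact le_antisymm (hc c) (hge c)
    omega
  obtain ⟨a, ha⟩ := hex
  set d := P.v (t - algebraMap F M a) with hd
  -- d divides every valuation of (t - c)
  have hdvd : ∀ c : F, d ∣ P.v (t - algebraMap F M c) := by
    intro c
    rcases eq_or_lt_of_le (hge c) with h0 | h0
    · rw [← h0]; exact dvd_zero d
    · -- then c = a
      by_cases hca : c = a
      · rw [hca]
      · exfalso
        have hsub : (t - algebraMap F M c) + (-(t - algebraMap F M a)) =
            algebraMap F M (a - c) := by
          rw [map_sub]; ring
        have hne0 : (t - algebraMap F M c) + (-(t - algebraMap F M a)) ≠ 0 := by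
          rw [hsub]
          exact (map_ne_zero (algebraMap F M)).mpr (sub_ne_zero.mpr (fun h => hca h.symm))
        have hmin := P.add_min _ _ (htne c) (neg_ne_zero.mpr (htne a)) hne0
        rw [hsub, P.triv _ (sub_ne_zero.mpr (fun h => hca h.symm)),
          P.v_neg' _ (htne a)] at hmin
        have : 0 < min (P.v (t - algebraMap F M c)) d := lt_min h0 ha
        omega
  have hdvdf : d ∣ (f.roots.map (fun c => P.v (t - algebraMap F M c))).sum := by
    apply Multiset.dvd_sum
    intro y hy
    obtain ⟨c, _, rfl⟩ := Multiset.mem_map.1 hy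
    exact hdvd c
  have hdvdg : d ∣ (g.roots.map (fun c => P.v (t - algebraMap F M c))).sum := by
    apply Multiset.dvd_sum
    intro y hy
    obtain ⟨c, _, rfl⟩ := Multiset.mem_map.1 hy
    exact hdvd c
  have hd1 : d ∣ 1 := hdiff ▸ dvd_sub hdvdf hdvdg
  have := Int.le_of_dvd one_pos hd1
  exact ⟨a, by omega⟩

end FFPrime

/-- Key lemma: for `c ∈ F` nonzero, `x^p + c·t` is nonzero and has valuation at most 1. -/
lemma ffprime_key {F M : Type*} [Field F] [Field M] [Algebra F M] [IsAlgClosed F]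
    (p : ℕ) (hp : p.Prime) [CharP F p]
    {t : M} (htrans : Transcendental F t) (hnp : ¬∃ c : M, c ^ p = t)
    (P : FFPrime F M) {a : F} (ha : P.v (t - algebraMap F M a) = 1)
    (x : M) (c : F) (hc : c ≠ 0) :
    x ^ p + algebraMap F M c * t ≠ 0 ∧ P.v (x ^ p + algebraMap F M c * t) ≤ 1 := by
  haveI : Fact p.Prime := ⟨hp⟩
  haveI : CharP M p := charP_of_injective_algebraMap (algebraMap F M).injective p
  have htne : ∀ c : F, t - algebraMap F M c ≠ 0 := by
    intro c h
    rw [sub_eq_zero] at h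
    exact htrans (h ▸ isAlgebraic_algebraMap c)
  have hC : algebraMap F M c ≠ 0 := (map_ne_zero (algebraMap F M)).mpr hc
  have hnz : x ^ p + algebraMap F M c * t ≠ 0 := by
    intro h0
    obtain ⟨d, hd⟩ := IsAlgClosed.exists_pow_nat_eq (k := F) (-c⁻¹) hp.pos
    apply hnp
    refine ⟨x * algebraMap F M d, ?_⟩
    have hxp : x ^ p = -(algebraMap F M c * t) := eq_neg_of_add_eq_zero_left h0
    rw [mul_pow, hxp, ← map_pow, hd, map_neg, map_inv₀]
    rw [neg_mul_neg, mul_comm (algebraMap F M c) t, mul_assoc, mul_inv_cancel₀ hC, mul_one]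
  constructor
  · exact hnz
  · obtain ⟨e, he⟩ := IsAlgClosed.exists_pow_nat_eq (k := F) (-(c * a)) hp.pos
    have hkey : x ^ p + algebraMap F M c * t =
        (x - algebraMap F M e) ^ p + algebraMap F M c * (t - algebraMap F M a) := by
      rw [sub_pow_char, ← map_pow, he]
      rw [map_neg, _root_.map_mul]
      ring
    rw [hkey]
    by_cases hxe : x = algebraMap F M e
    · rw [hxe, sub_self, zero_pow hp.ne_zero, zero_add,
        P.map_mul _ _ hC (htne a), P.triv c hc, ha]
      omega
    · have hxe' : x - algebraMap F M e ≠ 0 := sub_ne_zero.mpr hxe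
      have hv1 : P.v ((x - algebraMap F M e) ^ p) = p * P.v (x - algebraMap F M e) :=
        P.v_pow' _ hxe' p
      have hv2 : P.v (algebraMap F M c * (t - algebraMap F M a)) = 1 := by
        rw [P.map_mul _ _ hC (htne a), P.triv c hc, ha]
        omega
      have hne12 : P.v ((x - algebraMap F M e) ^ p) ≠
          P.v (algebraMap F M c * (t - algebraMap F M a)) := by
        rw [hv1, hv2]
        intro h
        have : (p : ℤ) ∣ 1 := ⟨_, h.symm⟩
        have := Int.le_of_dvd one_pos this
        have := hp.two_le
        omega
      rw [P.v_add_ne' _ _ (pow_ne_zero p hxe') (mul_ne_zero hC (htne a)) hne12, hv2]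
      exact min_le_right _ _

theorem stmt_12 {F M : Type*} [Field F] [Field M] [Algebra F M] [IsAlgClosed F]
    (p : ℕ) (hp : p.Prime) (hp2 : 2 < p) [CharP F p]
    (t : M) (htrans : Transcendental F t)
    (hfin : FiniteDimensional (IntermediateField.adjoin F {t}) M)
    (hnp : ¬∃ c : M, c ^ p = t)
    (x : M) (b : F) (hb1 : b ≠ 1) (hb2 : b ≠ -1)
    (P : FFPrime F M) (hunr : P.UnramifiedOver t) (hPt : P.v t = 0) :
    P.v ((x ^ p + t) / (x ^ p - t) + algebraMap F M b) ∈ ({-1, 0, 1} : Set ℤ) ∧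
    P.v (((x ^ p + t) / (x ^ p - t))⁻¹ + algebraMap F M b) ∈ ({-1, 0, 1} : Set ℤ) := by
  haveI : Fact p.Prime := ⟨hp⟩
  obtain ⟨a, ha⟩ := P.exists_uniformizer' htrans hPt hunr
  have hkey := fun (c : F) (hc : c ≠ 0) => ffprime_key p hp htrans hnp P ha x c hc
  have ht0 : t ≠ 0 := by
    intro h
    exact htrans (h ▸ isAlgebraic_zero)
  have hvct : ∀ c : F, c ≠ 0 → P.v (algebraMap F M c * t) = 0 := by
    intro c hc
    rw [P.map_mul _ _ ((map_ne_zero (algebraMap F M)).mpr hc) ht0, P.triv c hc, hPt]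
    ring
  have hW : ∀ c c' : F, c ≠ 0 → c' ≠ 0 →
      P.v (x ^ p + algebraMap F M c * t) - P.v (x ^ p + algebraMap F M c' * t) ∈
        ({-1, 0, 1} : Set ℤ) := by
    intro c c' hc hc'
    simp only [Set.mem_insert_iff, Set.mem_singleton_iff]
    by_cases hx0 : x = 0
    · rw [hx0, zero_pow hp.ne_zero, zero_add, zero_add, hvct c hc, hvct c' hc']
      omega
    · have hxp0 : x ^ p ≠ 0 := pow_ne_zero p hx0
      have hvxp : P.v (x ^ p) = p * P.v x := P.v_pow' x hx0 p
      rcases le_or_gt 0 (P.v x) with hge0 | hneg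
      · have bound : ∀ c0 : F, c0 ≠ 0 → 0 ≤ P.v (x ^ p + algebraMap F M c0 * t) ∧
            P.v (x ^ p + algebraMap F M c0 * t) ≤ 1 := by
          intro c0 hc0
          refine ⟨?_, (hkey c0 hc0).2⟩
          have hmin := P.add_min (x ^ p) (algebraMap F M c0 * t) hxp0
            (mul_ne_zero ((map_ne_zero (algebraMap F M)).mpr hc0) ht0) (hkey c0 hc0).1
          rw [hvct c0 hc0, hvxp] at hmin
          have hnn : (0 : ℤ) ≤ p * P.v x := mul_nonneg (by positivity) hge0
          rw [min_eq_right hnn] at hmin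
          exact hmin
        obtain ⟨l1, u1⟩ := bound c hc
        obtain ⟨l2, u2⟩ := bound c' hc'
        omega
      · have hlt : ∀ c0 : F, c0 ≠ 0 → P.v (x ^ p + algebraMap F M c0 * t) = P.v (x ^ p) := by
          intro c0 hc0
          apply P.v_add_left' _ _ hxp0
            (mul_ne_zero ((map_ne_zero (algebraMap F M)).mpr hc0) ht0)
          rw [hvct c0 hc0, hvxp]
          exact mul_neg_of_pos_of_neg (by exact_mod_cast hp.pos) hneg
        rw [hlt c hc, hlt c' hc']
        omega
  have h1b : (1 : F) + b ≠ 0 := by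
    intro h
    exact hb2 (by linear_combination h)
  have h1b' : (1 : F) - b ≠ 0 := by
    intro h
    exact hb1 (by linear_combination -h)
  have hbm1 : (b : F) - 1 ≠ 0 := sub_ne_zero.mpr hb1
  set c₁ : F := (1 - b) / (1 + b) with hc1def
  set c₂ : F := (b - 1) / (1 + b) with hc2def
  have hc₁ : c₁ ≠ 0 := div_ne_zero h1b' h1b
  have hc₂ : c₂ ≠ 0 := div_ne_zero hbm1 h1b
  have heq_m1 : x ^ p + algebraMap F M (-1) * t = x ^ p - t := by
    rw [map_neg, map_one]; ring
  have heq_p1 : x ^ p + algebraMap F M 1 * t = x ^ p + t := by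
    rw [map_one, one_mul]
  have hm1 : (-1 : F) ≠ 0 := neg_ne_zero.mpr one_ne_zero
  have hden : x ^ p - t ≠ 0 := heq_m1 ▸ (hkey (-1) hm1).1
  have hnum : x ^ p + t ≠ 0 := heq_p1 ▸ (hkey 1 one_ne_zero).1
  have h1bM : algebraMap F M (1 + b) ≠ 0 := (map_ne_zero (algebraMap F M)).mpr h1b
  have h1bM' : (1 : M) + algebraMap F M b ≠ 0 := by
    rw [← map_one (algebraMap F M), ← map_add]
    exact h1bM
  constructor
  · have hid1 : (x ^ p + t) / (x ^ p - t) + algebraMap F M b =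
        algebraMap F M (1 + b) * (x ^ p + algebraMap F M c₁ * t) / (x ^ p - t) := by
      rw [hc1def, map_div₀, map_add, map_sub, map_one]
      field_simp [h1bM']
      ring
    rw [hid1, P.v_div' _ _ (mul_ne_zero h1bM (hkey c₁ hc₁).1) hden,
      P.map_mul _ _ h1bM (hkey c₁ hc₁).1, P.triv _ h1b, ← heq_m1]
    have := hW c₁ (-1) hc₁ hm1
    simp only [Set.mem_insert_iff, Set.mem_singleton_iff] at this ⊢
    omega
  · have hid2 : ((x ^ p + t) / (x ^ p - t))⁻¹ + algebraMap F M b =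
        algebraMap F M (1 + b) * (x ^ p + algebraMap F M c₂ * t) / (x ^ p + t) := by
      rw [inv_div, hc2def, map_div₀, map_add, map_sub, map_one]
      field_simp [h1bM']
      ring
    rw [hid2, P.v_div' _ _ (mul_ne_zero h1bM (hkey c₂ hc₂).1) hnum,
      P.map_mul _ _ h1bM (hkey c₂ hc₂).1, P.triv _ h1b, ← heq_p1]
    have := hW c₂ 1 hc₂ one_ne_zero
    simp only [Set.mem_insert_iff, Set.mem_singleton_iff] at this ⊢
    omega
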